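/- Let F : C ⥤ D be a functor between cocomplete categories, and let u, v : A ⥤ B be fully faithful functors such that F preserves left Kan extensions along the composite v ∘ u (assumed fully faithful as well, e.g. with v fully faithful). Then F preserves left Kan extensions along u; that is, the canonical comparison u_!(F X) → F(u_! X) is an isomorphism for all X : A ⥤ C. -/

import Mathlib

open CategoryTheory CategoryTheory.Limits

universe u₁ v₃ u₃

variable {A : Type u₁} [SmallCategory A] {B : Type u₁} [SmallCategory B]
  {E : Type u₁} [SmallCategory E]
  {C : Type u₃} [Category.{v₃} C] {D : Type u₃} [Category.{v₃} D]

section Helpers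
variable {C₁ : Type*} {C₂ : Type*} [Category C₁] [Category C₂]

lemma isIso_unit_transfer {L L' : C₁ ⥤ C₂} {R : C₂ ⥤ C₁} (adj : L ⊣ R) (adj' : L' ⊣ R)
    (h : IsIso adj.unit) : IsIso adj'.unit := by
  rw [← Adjunction.unit_leftAdjointUniq_hom adj adj']
  infer_instance

lemma isIso_counit_app_of_iso {L : C₁ ⥤ C₂} {R : C₂ ⥤ C₁} (adj : L ⊣ R) (hu : IsIso adj.unit)
    {Y : C₂} {Z : C₁} (e : L.obj Z ≅ Y) : IsIso (adj.counit.app Y) := by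
  haveI := hu
  haveI h1 : IsIso (L.map (adj.unit.app Z) ≫ adj.counit.app (L.obj Z)) := by
    rw [adj.left_triangle_components Z]; exact IsIso.id _
  haveI h2 : IsIso (adj.counit.app (L.obj Z)) :=
    IsIso.of_isIso_comp_left (L.map (adj.unit.app Z)) _
  have h3 := adj.counit.naturality e.hom
  haveI h4 : IsIso (L.map (R.map e.hom) ≫ adj.counit.app Y) := by
    dsimp at h3; rw [h3]; infer_instance
  exact IsIso.of_isIso_comp_left (L.map (R.map e.hom)) _

end Helpers

/-- The canonical comparison map `w_!(X ⋙ F) ⟶ (w_! X) ⋙ F`. -/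
noncomputable def lanComparison {A' B' : Type u₁} [SmallCategory A'] [SmallCategory B']
    (w : A' ⥤ B')
    (lanC : (A' ⥤ C) ⥤ (B' ⥤ C)) (adjC : lanC ⊣ (Functor.whiskeringLeft A' B' C).obj w)
    (lanD : (A' ⥤ D) ⥤ (B' ⥤ D)) (adjD : lanD ⊣ (Functor.whiskeringLeft A' B' D).obj w)
    (F : C ⥤ D) (X : A' ⥤ C) :
    lanD.obj (X ⋙ F) ⟶ lanC.obj X ⋙ F :=
  (adjD.homEquiv (X ⋙ F) (lanC.obj X ⋙ F)).symm
    (Functor.whiskerRight (adjC.unit.app X) F)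

/-- Cancellation: if `u` and `v` are fully faithful and `F` preserves left Kan
extensions along `u ⋙ v`, then `F` preserves left Kan extensions along `u`. -/
theorem preserves_lan_of_preserves_lan_comp
    [HasColimitsOfSize.{u₁, u₁} C] [HasColimitsOfSize.{u₁, u₁} D]
    (u : A ⥤ B) [u.Full] [u.Faithful] (v : B ⥤ E) [v.Full] [v.Faithful]
    (F : C ⥤ D)
    (lanUC : (A ⥤ C) ⥤ (B ⥤ C)) (adjUC : lanUC ⊣ (Functor.whiskeringLeft A B C).obj u)
    (lanUD : (A ⥤ D) ⥤ (B ⥤ D)) (adjUD : lanUD ⊣ (Functor.whiskeringLeft A B D).obj u)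
    (lanWC : (A ⥤ C) ⥤ (E ⥤ C))
    (adjWC : lanWC ⊣ (Functor.whiskeringLeft A E C).obj (u ⋙ v))
    (lanWD : (A ⥤ D) ⥤ (E ⥤ D))
    (adjWD : lanWD ⊣ (Functor.whiskeringLeft A E D).obj (u ⋙ v))
    (h : ∀ X : A ⥤ C, IsIso (lanComparison (u ⋙ v) lanWC adjWC lanWD adjWD F X)) :
    ∀ X : A ⥤ C, IsIso (lanComparison u lanUC adjUC lanUD adjUD F X) := by
  intro X
  haveI huC : IsIso adjUC.unit := isIso_unit_transfer (u.lanAdjunction C) adjUC inferInstance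
  haveI huD : IsIso adjUD.unit := isIso_unit_transfer (u.lanAdjunction D) adjUD inferInstance
  haveI hwC : IsIso adjWC.unit :=
    isIso_unit_transfer ((u ⋙ v).lanAdjunction C) adjWC inferInstance
  haveI hwD : IsIso adjWD.unit :=
    isIso_unit_transfer ((u ⋙ v).lanAdjunction D) adjWD inferInstance
  -- from `h X`, the counit of `adjWD` at `lanWC.obj X ⋙ F` is an isomorphism
  have hW := h X
  rw [show lanComparison (u ⋙ v) lanWC adjWC lanWD adjWD F X
      = lanWD.map (Functor.whiskerRight (adjWC.unit.app X) F)
        ≫ adjWD.counit.app (lanWC.obj X ⋙ F) from adjWD.homEquiv_counit _ _ _] at hW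
  haveI : IsIso (lanWD.map (Functor.whiskerRight (adjWC.unit.app X) F)) := by
    haveI : IsIso (adjWC.unit.app X) := inferInstance
    infer_instance
  haveI := hW
  haveI hWcounit : IsIso (adjWD.counit.app (lanWC.obj X ⋙ F)) :=
    IsIso.of_isIso_comp_left (lanWD.map (Functor.whiskerRight (adjWC.unit.app X) F)) _
  set Z : A ⥤ D := (u ⋙ v) ⋙ (lanWC.obj X ⋙ F) with hZ
  let e0 : lanWD.obj Z ≅ lanWC.obj X ⋙ F := asIso (adjWD.counit.app (lanWC.obj X ⋙ F))
  -- identify `lanW` with `lanU ⋙ v.lan`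
  let adjW'C : (lanUC ⋙ v.lan) ⊣ (Functor.whiskeringLeft A E C).obj (u ⋙ v) :=
    (adjUC.comp (v.lanAdjunction C)).ofNatIsoRight (Iso.refl _)
  let eWC : lanWC ≅ lanUC ⋙ v.lan := adjWC.leftAdjointUniq adjW'C
  let adjW'D : (lanUD ⋙ v.lan) ⊣ (Functor.whiskeringLeft A E D).obj (u ⋙ v) :=
    (adjUD.comp (v.lanAdjunction D)).ofNatIsoRight (Iso.refl _)
  let eWD : lanWD ≅ lanUD ⋙ v.lan := adjWD.leftAdjointUniq adjW'D
  -- the main chain of isomorphisms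
  let e1 : lanUC.obj X ⋙ F ≅ v ⋙ (lanWC.obj X ⋙ F) :=
    Functor.isoWhiskerRight (asIso ((v.lanAdjunction C).unit.app (lanUC.obj X))) F ≪≫
      Functor.associator v (v.lan.obj (lanUC.obj X)) F ≪≫
      Functor.isoWhiskerLeft v (Functor.isoWhiskerRight (eWC.app X).symm F)
  let e : lanUD.obj Z ≅ lanUC.obj X ⋙ F :=
    asIso ((v.lanAdjunction D).unit.app (lanUD.obj Z)) ≪≫
      Functor.isoWhiskerLeft v (eWD.symm.app Z) ≪≫
      Functor.isoWhiskerLeft v e0 ≪≫ e1.symm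
  haveI := isIso_counit_app_of_iso adjUD huD e
  rw [show lanComparison u lanUC adjUC lanUD adjUD F X
      = lanUD.map (Functor.whiskerRight (adjUC.unit.app X) F)
        ≫ adjUD.counit.app (lanUC.obj X ⋙ F) from adjUD.homEquiv_counit _ _ _]
  haveI : IsIso (adjUC.unit.app X) := inferInstance
  infer_instance
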